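/- Monotone growth of the model under streaming evaluation: let P be a forward-propagating, temporally stratified temporal program, and let S_{≤t} denote the facts of stream S with time-stamp at most t. Then the perfect model of P ∪ S_{≤t} restricted to atoms with time-stamp at most t equals the perfect model of P ∪ S restricted to atoms with time-stamp at most t; in particular, as t increases, the sequence of these restricted perfect models is monotonically increasing (each is contained in the next), so streaming evaluation never needs to retract previously derived facts. -/
import Mathlib


/-- A ground rule over atoms of type `A`. -/
structure GRule (A : Type) where
  head : A
  pos : List A
  neg : List A

/-- A stream fact `a` viewed as a bodiless rule. -/
def factRule {A : Type} (a : A) : GRule A := ⟨a, [], []⟩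

/-- `lam` is a (local) stratification of the ground program `P`. -/
def IsLocalStratG {A : Type} (P : Set (GRule A)) (lam : A → ℕ) : Prop :=
  ∀ r ∈ P, (∀ b ∈ r.pos, lam b ≤ lam r.head) ∧ (∀ c ∈ r.neg, lam c < lam r.head)

/-- One stratum of bottom-up evaluation with closed world assumption on `prev`. -/
inductive StratStep {A : Type} (P : Set (GRule A)) (prev : Set A) (lam : A → ℕ) (n : ℕ) :
    A → Prop
  | intro (r : GRule A) (hr : r ∈ P) (hhead : lam r.head = n)
      (hpos : ∀ b ∈ r.pos, b ∉ prev → StratStep P prev lam n b)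
      (hneg : ∀ c ∈ r.neg, c ∉ prev) : StratStep P prev lam n r.head

/-- The model computed bottom-up through the first `n + 1` strata. -/
def modelUpTo {A : Type} (P : Set (GRule A)) (lam : A → ℕ) : ℕ → Set A
  | 0 => {a | StratStep P ∅ lam 0 a}
  | n + 1 => modelUpTo P lam n ∪ {a | StratStep P (modelUpTo P lam n) lam (n + 1) a}

/-- The perfect model of a stratified program. -/
def perfectModel {A : Type} (P : Set (GRule A)) (lam : A → ℕ) : Set A :=
  ⋃ n, modelUpTo P lam n

/-- `P` is forward-propagating. -/
def ForwardProp {A : Type} (P : Set (GRule A)) (time : A → ℤ) : Prop :=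
  ∀ r ∈ P, (∀ b ∈ r.pos, time b ≤ time r.head) ∧ (∀ c ∈ r.neg, time c ≤ time r.head)

/-- The prefix `S_{≤t}` of a stream. -/
def streamUpTo {A : Type} (time : A → ℤ) (S : Set A) (t : ℤ) : Set A :=
  {a ∈ S | time a ≤ t}

/-- Monotone growth of the model under streaming evaluation: for a forward-propagating,
temporally stratified program `P`, the perfect model of `P ∪ S_{≤t}` restricted to atoms
with time-stamp ≤ `t` equals the perfect model of `P ∪ S` restricted to time-stamp ≤ `t`;
moreover these restricted models grow monotonically with `t`, so streaming evaluation never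
retracts previously derived facts. -/
lemma step_transfer {A : Type} (time : A → ℤ) (P : Set (GRule A)) (lam : A → ℕ)
    (hfp : ForwardProp P time) (S1 S2 : Set A) (t : ℤ)
    (hS : ∀ a, time a ≤ t → (a ∈ S1 ↔ a ∈ S2))
    (prev1 prev2 : Set A) (hprev : ∀ a, time a ≤ t → (a ∈ prev1 ↔ a ∈ prev2))
    (n : ℕ) {a : A} (h : StratStep (P ∪ factRule '' S1) prev1 lam n a)
    (ht : time a ≤ t) :
    StratStep (P ∪ factRule '' S2) prev2 lam n a := by
  induction h with
  | intro r hr hhead hpos hneg ih =>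
    rcases hr with hr | ⟨b, hb, rfl⟩
    · refine StratStep.intro r (Or.inl hr) hhead ?_ ?_
      · intro b hb hb2
        have htb : time b ≤ t := le_trans ((hfp r hr).1 b hb) ht
        exact ih b hb (fun h1 => hb2 ((hprev b htb).1 h1)) htb
      · intro c hc
        have htc : time c ≤ t := le_trans ((hfp r hr).2 c hc) ht
        exact fun h2 => hneg c hc ((hprev c htc).2 h2)
    · refine StratStep.intro (factRule b) (Or.inr ⟨b, (hS b ht).1 hb, rfl⟩) hhead ?_ ?_
      · intro x hx; simp [factRule] at hx
      · intro x hx; simp [factRule] at hx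

lemma model_transfer {A : Type} (time : A → ℤ) (P : Set (GRule A)) (lam : A → ℕ)
    (hfp : ForwardProp P time) (S1 S2 : Set A) (t : ℤ)
    (hS : ∀ a, time a ≤ t → (a ∈ S1 ↔ a ∈ S2)) (n : ℕ) :
    ∀ a, time a ≤ t →
      (a ∈ modelUpTo (P ∪ factRule '' S1) lam n ↔ a ∈ modelUpTo (P ∪ factRule '' S2) lam n) := by
  have hS' : ∀ a, time a ≤ t → (a ∈ S2 ↔ a ∈ S1) := fun a ha => (hS a ha).symm
  induction n with
  | zero =>
    intro a ha
    constructor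
    · exact fun h => step_transfer time P lam hfp S1 S2 t hS ∅ ∅ (fun _ _ => Iff.rfl) 0 h ha
    · exact fun h => step_transfer time P lam hfp S2 S1 t hS' ∅ ∅ (fun _ _ => Iff.rfl) 0 h ha
  | succ n ihn =>
    intro a ha
    simp only [modelUpTo, Set.mem_union, Set.mem_setOf_eq]
    constructor
    · rintro (h | h)
      · exact Or.inl ((ihn a ha).1 h)
      · exact Or.inr (step_transfer time P lam hfp S1 S2 t hS _ _ ihn (n+1) h ha)
    · rintro (h | h)
      · exact Or.inl ((ihn a ha).2 h)
      · exact Or.inr (step_transfer time P lam hfp S2 S1 t hS' _ _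
          (fun a ha => (ihn a ha).symm) (n+1) h ha)

lemma perfect_transfer {A : Type} (time : A → ℤ) (P : Set (GRule A)) (lam : A → ℕ)
    (hfp : ForwardProp P time) (S1 S2 : Set A) (t : ℤ)
    (hS : ∀ a, time a ≤ t → (a ∈ S1 ↔ a ∈ S2)) :
    ∀ a, time a ≤ t →
      (a ∈ perfectModel (P ∪ factRule '' S1) lam ↔ a ∈ perfectModel (P ∪ factRule '' S2) lam) := by
  intro a ha
  simp only [perfectModel, Set.mem_iUnion]
  exact exists_congr fun n => model_transfer time P lam hfp S1 S2 t hS n a ha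

theorem streaming_monotone_growth (A : Type) (time : A → ℤ)
    (P : Set (GRule A)) (lam : A → ℕ)
    (hfp : ForwardProp P time) (hstrat : IsLocalStratG P lam)
    (S : Set A) :
    (∀ t : ℤ,
      {a ∈ perfectModel (P ∪ factRule '' streamUpTo time S t) lam | time a ≤ t} =
      {a ∈ perfectModel (P ∪ factRule '' S) lam | time a ≤ t}) ∧
    (∀ t : ℤ,
      {a ∈ perfectModel (P ∪ factRule '' streamUpTo time S t) lam | time a ≤ t} ⊆
      {a ∈ perfectModel (P ∪ factRule '' streamUpTo time S (t + 1)) lam | time a ≤ t + 1}) := by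
  have key : ∀ t : ℤ,
      {a ∈ perfectModel (P ∪ factRule '' streamUpTo time S t) lam | time a ≤ t} =
      {a ∈ perfectModel (P ∪ factRule '' S) lam | time a ≤ t} := by
    intro t
    ext a
    simp only [Set.mem_setOf_eq, and_congr_left_iff]
    intro ha
    exact perfect_transfer time P lam hfp (streamUpTo time S t) S t
      (fun b hb => ⟨fun h => h.1, fun h => ⟨h, hb⟩⟩) a ha
  refine ⟨key, fun t a ha => ?_⟩
  rw [key t] at ha
  rw [key (t + 1)]
  exact ⟨ha.1, le_trans ha.2 (by linarith)⟩
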